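/- Let m, k, l be natural numbers with k + l < m − 1, and let C_{j,h}(m,k,l) be the coefficients of the dual constrained Bernstein basis in the Bernstein basis, extended by the convention C_{j,h} := 0 whenever j ∉ {k+1,…,m−l−1} or h ∉ {k+1,…,m−l−1}. Define A(u) := (u−m)(u−k)(u+k+2)/(u+1) and B(u) := u(u−m−l−2)(u−m+l)/(u−m−1). Then for all j with k+1 ≤ j ≤ m−l−2 and all h with k+1 ≤ h ≤ m−l−1, A(j)·C_{j+1,h} = 2(j−h)(j+h−m)·C_{j,h} + B(h)·C_{j,h−1} + A(h)·C_{j,h+1} − B(j)·C_{j−1,h}. -/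

import Mathlib

open Finset intervalIntegral Polynomial


lemma beta_nat (a b : ℕ) :
    ∫ u in (0:ℝ)..1, u ^ a * (1 - u) ^ b
      = (a.factorial * b.factorial : ℝ) / (a + b + 1).factorial := by
  have hu : 0 < Complex.re ((a:ℂ) + 1) := by
    simp [Complex.add_re]
    positivity
  have h1 := Complex.betaIntegral_eval_nat_add_one_right hu b
  rw [Complex.betaIntegral] at h1
  have heq : ∀ x : ℝ, (x:ℂ) ^ ((a:ℂ) + 1 - 1) * ((1:ℂ) - (x:ℂ)) ^ (((b:ℕ):ℂ) + 1 - 1)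
      = ((x ^ a * (1 - x) ^ b : ℝ) : ℂ) := by
    intro x
    rw [add_sub_cancel_right, add_sub_cancel_right, Complex.cpow_natCast, Complex.cpow_natCast]
    push_cast
    ring
  simp_rw [heq, intervalIntegral.integral_ofReal] at h1
  have key : ∀ c : ℕ, (a.factorial : ℂ) * ∏ j ∈ Finset.range (c+1), ((a:ℂ) + 1 + j) = ((a + c + 1).factorial : ℂ) := by
    intro c
    induction c with
    | zero =>
      simp [Nat.factorial_succ]
      push_cast
      ring
    | succ n ih =>
      rw [Finset.prod_range_succ, ← mul_assoc, ih]
      have h3 : (a + (n + 1) + 1).factorial = (a + n + 1 + 1) * (a + n + 1).factorial := by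
        rw [show a + (n + 1) + 1 = (a + n + 1) + 1 by ring, Nat.factorial_succ]
      rw [h3]
      push_cast
      ring
  have hprod := key b
  have hfa : (a.factorial : ℂ) ≠ 0 := by exact_mod_cast a.factorial_ne_zero
  have hfab : ((a + b + 1).factorial : ℂ) ≠ 0 := by exact_mod_cast (a + b + 1).factorial_ne_zero
  have hprodne : (∏ j ∈ Finset.range (b+1), ((a:ℂ) + 1 + j)) ≠ 0 := by
    intro h0
    rw [h0, mul_zero] at hprod
    exact hfab hprod.symm
  have h2 : ((∫ x in (0:ℝ)..1, x ^ a * (1 - x) ^ b : ℝ) : ℂ)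
      = (((a.factorial * b.factorial : ℝ) / (a + b + 1).factorial : ℝ) : ℂ) := by
    rw [h1]
    push_cast
    rw [div_eq_div_iff hprodne hfab]
    push_cast at hprod
    linear_combination (-(b.factorial : ℂ)) * hprod
  exact_mod_cast h2


noncomputable def gAux (m j h : ℕ) : ℝ :=
  (m.choose j) * (m.choose h) * (j + h).factorial * (2 * m - (j + h)).factorial
    / (2 * m + 1).factorial


lemma gram (m j h : ℕ) (hj : j ≤ m) (hh : h ≤ m) :
    (∫ u in (0:ℝ)..1, (bernsteinPolynomial ℝ m j).eval u * (bernsteinPolynomial ℝ m h).eval u)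
      = gAux m j h := by
  have hev : ∀ (ν : ℕ) (u : ℝ),
      (bernsteinPolynomial ℝ m ν).eval u = (m.choose ν) * (u ^ ν * (1 - u) ^ (m - ν)) := by
    intro ν u
    simp [bernsteinPolynomial, mul_assoc]
  have harr : ∀ u : ℝ,
      (bernsteinPolynomial ℝ m j).eval u * (bernsteinPolynomial ℝ m h).eval u
        = ((m.choose j : ℝ) * (m.choose h)) * (u ^ (j + h) * (1 - u) ^ (2 * m - (j + h))) := by
    intro u
    rw [hev, hev, show 2 * m - (j + h) = (m - j) + (m - h) by omega, pow_add, pow_add]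
    ring
  simp_rw [harr]
  rw [intervalIntegral.integral_const_mul, beta_nat,
    show j + h + (2 * m - (j + h)) + 1 = 2 * m + 1 by omega, gAux]
  ring

lemma gAux_symm (m j h : ℕ) : gAux m j h = gAux m h j := by
  rw [gAux, gAux, add_comm j h]
  ring

lemma gAux_pos (m j h : ℕ) (hj : j ≤ m) (hh : h ≤ m) : 0 < gAux m j h := by
  rw [gAux]
  have h1 : 0 < (m.choose j : ℝ) := by exact_mod_cast Nat.choose_pos hj
  have h2 : 0 < (m.choose h : ℝ) := by exact_mod_cast Nat.choose_pos hh
  positivity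

lemma gAux_succ (m j h : ℕ) (hh : h < m) (hjh : j + h < 2 * m) :
    gAux m j (h + 1) * (((h : ℝ) + 1) * (2 * (m : ℝ) - j - h))
      = gAux m j h * (((m : ℝ) - h) * ((j : ℝ) + h + 1)) := by
  have f1 : ((j + (h + 1)).factorial : ℝ) = ((j : ℝ) + h + 1) * (j + h).factorial := by
    rw [show j + (h + 1) = (j + h) + 1 by ring, Nat.factorial_succ]
    push_cast
    ring
  have f2 : ((2 * m - (j + h)).factorial : ℝ)
      = (2 * (m : ℝ) - j - h) * ((2 * m - (j + (h + 1))).factorial) := by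
    rw [show 2 * m - (j + h) = (2 * m - (j + (h + 1))) + 1 by omega, Nat.factorial_succ]
    rw [Nat.cast_mul, Nat.cast_add, Nat.cast_one, Nat.cast_sub (by omega)]
    push_cast
    ring
  have f3 : (m.choose (h + 1) : ℝ) * ((h : ℝ) + 1) = (m.choose h : ℝ) * ((m : ℝ) - h) := by
    have := Nat.choose_succ_right_eq m h
    have hcast : ((m.choose (h + 1) * (h + 1) : ℕ) : ℝ) = ((m.choose h * (m - h) : ℕ) : ℝ) :=
      congrArg _ this
    rw [Nat.cast_mul, Nat.cast_mul, Nat.cast_sub hh.le] at hcast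
    push_cast at hcast ⊢
    linarith [hcast]
  rw [gAux, gAux, f1, f2]
  rw [div_mul_eq_mul_div, div_mul_eq_mul_div,
    div_left_inj' (Nat.cast_ne_zero.mpr (Nat.factorial_ne_zero _))]
  linear_combination ((m.choose j : ℝ) * (j + h).factorial * ((2 * m - (j + (h+1))).factorial)
    * ((j : ℝ) + h + 1) * (2 * (m : ℝ) - j - h)) * f3

lemma star (m k l : ℕ) (A B : ℝ → ℝ)
    (hA : ∀ u : ℝ, A u = (u - m) * (u - k) * (u + k + 2) / (u + 1))
    (hB : ∀ u : ℝ, B u = u * (u - m - l - 2) * (u - m + l) / (u - m - 1))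
    (hklm : k + l + 1 < m) (j h : ℕ)
    (hj1 : k + 1 ≤ j) (hj2 : j + l + 1 ≤ m) (hh1 : k + 1 ≤ h) (hh2 : h + l + 1 ≤ m) :
    A ((h - 1 : ℕ) : ℝ) * gAux m j (h - 1) + B ((h + 1 : ℕ) : ℝ) * gAux m j (h + 1)
        + 2 * h * ((m : ℝ) - h) * gAux m j h
      = A ((j - 1 : ℕ) : ℝ) * gAux m (j - 1) h + B ((j + 1 : ℕ) : ℝ) * gAux m (j + 1) h
        + 2 * j * ((m : ℝ) - j) * gAux m j h := by
  obtain ⟨a, rfl⟩ : ∃ a, j = a + 1 := ⟨j - 1, by omega⟩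
  obtain ⟨b, rfl⟩ : ∃ b, h = b + 1 := ⟨h - 1, by omega⟩
  simp only [Nat.add_sub_cancel]
  have hb2 : (b : ℝ) + 2 ≤ m := by exact_mod_cast (by omega : b + 2 ≤ m)
  have ha2 : (a : ℝ) + 2 ≤ m := by exact_mod_cast (by omega : a + 2 ≤ m)
  have hab : (a : ℝ) + (b : ℝ) + 4 ≤ 2 * m := by exact_mod_cast (by omega : a + b + 4 ≤ 2 * m)
  have e1 := gAux_succ m (a + 1) b (by omega) (by omega)
  have e2 := gAux_succ m (a + 1) (b + 1) (by omega) (by omega)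
  have e3 := gAux_succ m (b + 1) a (by omega) (by omega)
  have e4 := gAux_succ m (b + 1) (a + 1) (by omega) (by omega)
  rw [gAux_symm m (b + 1) (a + 1)] at e3 e4
  rw [gAux_symm m (b + 1) a] at e3
  rw [gAux_symm m (b + 1) (a + 1 + 1)] at e4
  push_cast at e1 e2 e3 e4 ⊢
  have hb0 : (0:ℝ) ≤ (b:ℝ) := Nat.cast_nonneg b
  have ha0 : (0:ℝ) ≤ (a:ℝ) := Nat.cast_nonneg a
  have n1 : (m:ℝ) - b ≠ 0 := by linarith
  have n2 : (a:ℝ) + 1 + b + 1 ≠ 0 := by linarith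
  have n3 : (b:ℝ) + 1 + 1 ≠ 0 := by linarith
  have n4 : 2 * (m:ℝ) - ((a:ℝ)+1) - ((b:ℝ)+1) ≠ 0 := by linarith
  have n5 : (m:ℝ) - a ≠ 0 := by linarith
  have n6 : (a:ℝ) + 1 + 1 ≠ 0 := by linarith
  have n7 : (b:ℝ) + 1 + a + 1 ≠ 0 := by linarith
  have n9 : 2 * (m:ℝ) - ((b:ℝ)+1) - ((a:ℝ)+1) ≠ 0 := by linarith
  have n11 : (b:ℝ) + 1 ≠ 0 := by linarith
  have n12 : (a:ℝ) + 1 ≠ 0 := by linarith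
  have n13 : (b:ℝ) + 1 + 1 - (m:ℝ) - 1 ≠ 0 := by linarith
  have n14 : (a:ℝ) + 1 + 1 - (m:ℝ) - 1 ≠ 0 := by linarith
  have n15 : (a:ℝ) + b + 2 ≠ 0 := by linarith
  have n16 : 2 * (m:ℝ) - a - b - 2 ≠ 0 := by linarith
  set G := gAux m (a + 1) (b + 1) with hG
  have t1 : A (b : ℝ) * gAux m (a + 1) b
      = G * (-(((b:ℝ) - k) * ((b:ℝ) + k + 2) * (2 * (m:ℝ) - a - b - 1))) / ((a:ℝ) + b + 2) := by
    rw [hA, div_mul_eq_mul_div, div_eq_div_iff n11 n15]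
    linear_combination (((b:ℝ) - k) * ((b:ℝ) + k + 2)) * e1
  have t2 : B ((b : ℝ) + 1 + 1) * gAux m (a + 1) (b + 1 + 1)
      = G * (-(((b:ℝ) - m - l) * ((b:ℝ) + 2 - m + l) * ((a:ℝ) + b + 3)))
        / (2 * (m:ℝ) - a - b - 2) := by
    rw [hB, div_mul_eq_mul_div, div_eq_div_iff n13 n16]
    linear_combination (((b:ℝ) - m - l) * ((b:ℝ) + 2 - m + l)) * e2
  have t3 : A (a : ℝ) * gAux m a (b + 1)
      = G * (-(((a:ℝ) - k) * ((a:ℝ) + k + 2) * (2 * (m:ℝ) - a - b - 1))) / ((a:ℝ) + b + 2) := by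
    rw [hA, div_mul_eq_mul_div, div_eq_div_iff n12 n15]
    linear_combination (((a:ℝ) - k) * ((a:ℝ) + k + 2)) * e3
  have t4 : B ((a : ℝ) + 1 + 1) * gAux m (a + 1 + 1) (b + 1)
      = G * (-(((a:ℝ) - m - l) * ((a:ℝ) + 2 - m + l) * ((b:ℝ) + a + 3)))
        / (2 * (m:ℝ) - a - b - 2) := by
    rw [hB, div_mul_eq_mul_div, div_eq_div_iff n14 n16]
    linear_combination (((a:ℝ) - m - l) * ((a:ℝ) + 2 - m + l)) * e4
  rw [t1, t2, t3, t4]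
  field_simp
  ring

lemma sum_tridR (I : Finset ℕ) (f1 f2 f3 : ℕ → ℝ) (p : ℕ) (hp : p ∈ I) (h1 : 1 ≤ p)
    (hup : p + 1 ∉ I → f1 (p + 1) = 0) (hdn : p - 1 ∉ I → f2 (p - 1) = 0) :
    ∑ i ∈ I, ((if i = p + 1 then f1 i else 0) + (if i + 1 = p then f2 i else 0)
      + (if i = p then f3 i else 0))
      = f1 (p + 1) + f2 (p - 1) + f3 p := by
  rw [Finset.sum_add_distrib, Finset.sum_add_distrib]
  have s1 : ∑ i ∈ I, (if i = p + 1 then f1 i else 0) = f1 (p + 1) := by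
    rw [Finset.sum_ite_eq' I (p + 1) f1]
    by_cases hmem : p + 1 ∈ I
    · rw [if_pos hmem]
    · rw [if_neg hmem, hup hmem]
  have s2 : ∑ i ∈ I, (if i + 1 = p then f2 i else 0) = f2 (p - 1) := by
    rw [Finset.sum_eq_single (p - 1)]
    · rw [if_pos (by omega)]
    · intro b _ hbne
      rw [if_neg (by omega)]
    · intro hmem
      rw [if_pos (by omega)]
      exact hdn hmem
  have s3 : ∑ i ∈ I, (if i = p then f3 i else 0) = f3 p := by
    rw [Finset.sum_ite_eq' I p f3, if_pos hp]
  rw [s1, s2, s3]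

lemma sum_tridL (I : Finset ℕ) (f1 f2 f3 : ℕ → ℝ) (p : ℕ) (hp : p ∈ I) (h1 : 1 ≤ p)
    (hdn : p - 1 ∉ I → f1 (p - 1) = 0) (hup : p + 1 ∉ I → f2 (p + 1) = 0) :
    ∑ i ∈ I, ((if p = i + 1 then f1 i else 0) + (if p + 1 = i then f2 i else 0)
      + (if p = i then f3 i else 0))
      = f1 (p - 1) + f2 (p + 1) + f3 p := by
  rw [Finset.sum_add_distrib, Finset.sum_add_distrib]
  have s1 : ∑ i ∈ I, (if p = i + 1 then f1 i else 0) = f1 (p - 1) := by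
    rw [Finset.sum_eq_single (p - 1)]
    · rw [if_pos (by omega)]
    · intro b _ hbne
      rw [if_neg (by omega)]
    · intro hmem
      rw [if_pos (by omega)]
      exact hdn hmem
  have s2 : ∑ i ∈ I, (if p + 1 = i then f2 i else 0) = f2 (p + 1) := by
    rw [Finset.sum_ite_eq I (p + 1) f2]
    by_cases hmem : p + 1 ∈ I
    · rw [if_pos hmem]
    · rw [if_neg hmem, hup hmem]
  have s3 : ∑ i ∈ I, (if p = i then f3 i else 0) = f3 p := by
    rw [Finset.sum_ite_eq I p f3, if_pos hp]
  rw [s1, s2, s3]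

theorem dual_basis_coeff_recurrence (m k l : ℕ) (hklm : k + l + 1 < m)
    (D : ℕ → Polynomial ℝ) (C : ℕ → ℕ → ℝ)
    (hmem : ∀ j ∈ Finset.Icc (k + 1) (m - l - 1),
      D j ∈ Submodule.span ℝ
        ((fun i => bernsteinPolynomial ℝ m i) '' Set.Icc (k + 1) (m - l - 1)))
    (hdual : ∀ j ∈ Finset.Icc (k + 1) (m - l - 1), ∀ h ∈ Finset.Icc (k + 1) (m - l - 1),
      (∫ u in (0:ℝ)..1, (D j).eval u * (bernsteinPolynomial ℝ m h).eval u)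
        = if j = h then 1 else 0)
    (hC : ∀ j ∈ Finset.Icc (k + 1) (m - l - 1),
      D j = ∑ h ∈ Finset.Icc (k + 1) (m - l - 1), C j h • bernsteinPolynomial ℝ m h)
    (hC0 : ∀ j h : ℕ, j ∉ Finset.Icc (k + 1) (m - l - 1) ∨ h ∉ Finset.Icc (k + 1) (m - l - 1) →
      C j h = 0)
    (A B : ℝ → ℝ)
    (hA : ∀ u : ℝ, A u = (u - m) * (u - k) * (u + k + 2) / (u + 1))
    (hB : ∀ u : ℝ, B u = u * (u - m - l - 2) * (u - m + l) / (u - m - 1)) :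
    ∀ j h : ℕ, k + 1 ≤ j → j ≤ m - l - 2 → k + 1 ≤ h → h ≤ m - l - 1 →
      A j * C (j + 1) h
        = 2 * ((j : ℝ) - h) * ((j : ℝ) + h - m) * C j h
            + B h * C j (h - 1) + A h * C j (h + 1) - B j * C (j - 1) h := by
  intro j h hj1 hj2 hh1 hh2
  set I : Finset ℕ := Finset.Icc (k + 1) (m - l - 1) with hIdef
  have hIc : ∀ x, x ∈ I ↔ k + 1 ≤ x ∧ x ≤ m - l - 1 := fun x => Finset.mem_Icc
  have hAk : A (k : ℝ) = 0 := by
    rw [hA, sub_self, mul_zero, zero_mul, zero_div]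
  have hBml : B ((m - l : ℕ) : ℝ) = 0 := by
    rw [hB, show ((m - l : ℕ) : ℝ) - (m : ℝ) + (l : ℝ) = 0 by
      rw [Nat.cast_sub (by omega)]; ring, mul_zero, zero_div]
  set Tnat : ℕ → ℕ → ℝ := fun x y =>
    (if y = x + 1 then A x else 0) + (if y + 1 = x then B x else 0)
      + (if y = x then 2 * (x : ℝ) * ((m : ℝ) - x) else 0) with hTnat
  set Cm : Matrix I I ℝ := fun p q => C p.1 q.1 with hCmdef
  set Gm : Matrix I I ℝ := fun p q => gAux m p.1 q.1 with hGmdef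
  set Tm : Matrix I I ℝ := fun p q => Tnat p.1 q.1 with hTmdef
  have hCG : Cm * Gm = 1 := by
    ext p q
    rw [Matrix.mul_apply, Matrix.one_apply]
    have conv1 : ∑ i : I, Cm p i * Gm i q = ∑ i ∈ I, C p.1 i * gAux m i q.1 :=
      Finset.sum_coe_sort I (fun i => C p.1 i * gAux m i q.1)
    rw [conv1]
    have key := hdual p.1 p.2 q.1 q.2
    rw [hC p.1 p.2] at key
    have hint : ∀ u : ℝ,
        (∑ i ∈ I, C p.1 i • bernsteinPolynomial ℝ m i).eval u
          * (bernsteinPolynomial ℝ m q.1).eval u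
        = ∑ i ∈ I, C p.1 i *
            ((bernsteinPolynomial ℝ m i).eval u * (bernsteinPolynomial ℝ m q.1).eval u) := by
      intro u
      rw [Polynomial.eval_finset_sum, Finset.sum_mul]
      refine Finset.sum_congr rfl fun i _ => ?_
      rw [Polynomial.eval_smul, smul_eq_mul, mul_assoc]
    simp_rw [hint] at key
    rw [intervalIntegral.integral_finset_sum (fun i _ =>
      (Continuous.intervalIntegrable (u := fun u => C p.1 i * ((bernsteinPolynomial ℝ m i).eval u * (bernsteinPolynomial ℝ m q.1).eval u)) (continuous_const.mul ((Polynomial.continuous _).mul (Polynomial.continuous _))) _ _))] at key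
    simp_rw [intervalIntegral.integral_const_mul] at key
    have key2 : ∑ i ∈ I, C p.1 i * gAux m i q.1 = if p.1 = q.1 then 1 else 0 := by
      rw [← key]
      refine Finset.sum_congr rfl fun i hi => ?_
      rw [gram m i q.1 (by have := (hIc i).mp hi; omega) (by have := (hIc q.1).mp q.2; omega)]
    rw [key2]
    by_cases hpq : p = q
    · rw [if_pos hpq, if_pos (by rw [hpq])]
    · rw [if_neg hpq, if_neg (fun hc => hpq (Subtype.ext hc))]
  have hGC : Gm * Cm = 1 := mul_eq_one_comm.mp hCG
  have hGT : Gm * Tm = Tm.transpose * Gm := by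
    ext p q
    rw [Matrix.mul_apply, Matrix.mul_apply]
    simp only [Matrix.transpose_apply]
    have hq := (hIc q.1).mp q.2
    have hp := (hIc p.1).mp p.2
    have conv1 : ∑ i : I, Gm p i * Tm i q = ∑ i ∈ I, gAux m p.1 i * Tnat i q.1 :=
      Finset.sum_coe_sort I (fun i => gAux m p.1 i * Tnat i q.1)
    have conv2 : ∑ i : I, Tm i p * Gm i q = ∑ i ∈ I, Tnat i p.1 * gAux m i q.1 :=
      Finset.sum_coe_sort I (fun i => Tnat i p.1 * gAux m i q.1)
    rw [conv1, conv2]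
    have lhs : ∑ i ∈ I, gAux m p.1 i * Tnat i q.1
        = gAux m p.1 (q.1 - 1) * A ((q.1 - 1 : ℕ) : ℝ)
          + gAux m p.1 (q.1 + 1) * B ((q.1 + 1 : ℕ) : ℝ)
          + gAux m p.1 q.1 * (2 * (q.1 : ℝ) * ((m : ℝ) - q.1)) := by
      have hterm : ∀ i, gAux m p.1 i * Tnat i q.1
          = ((if q.1 = i + 1 then gAux m p.1 i * A i else 0)
            + (if q.1 + 1 = i then gAux m p.1 i * B i else 0)
            + (if q.1 = i then gAux m p.1 i * (2 * (i : ℝ) * ((m : ℝ) - i)) else 0)) := by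
        intro i
        rw [hTnat]
        simp only [mul_add, mul_ite, mul_zero]
      simp_rw [hterm]
      exact sum_tridL I _ _ _ q.1 q.2 (by omega)
        (fun hmem => by
          have hqk : q.1 - 1 = k := by
            have := (hIc (q.1 - 1)).not.mp hmem
            omega
          rw [hqk, hAk, mul_zero])
        (fun hmem => by
          have hqm : q.1 + 1 = m - l := by
            have := (hIc (q.1 + 1)).not.mp hmem
            omega
          rw [hqm, hBml, mul_zero])
    have rhs : ∑ i ∈ I, Tnat i p.1 * gAux m i q.1
        = A ((p.1 - 1 : ℕ) : ℝ) * gAux m (p.1 - 1) q.1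
          + B ((p.1 + 1 : ℕ) : ℝ) * gAux m (p.1 + 1) q.1
          + 2 * (p.1 : ℝ) * ((m : ℝ) - p.1) * gAux m p.1 q.1 := by
      have hterm : ∀ i, Tnat i p.1 * gAux m i q.1
          = ((if p.1 = i + 1 then A i * gAux m i q.1 else 0)
            + (if p.1 + 1 = i then B i * gAux m i q.1 else 0)
            + (if p.1 = i then 2 * (i : ℝ) * ((m : ℝ) - i) * gAux m i q.1 else 0)) := by
        intro i
        rw [hTnat]
        simp only [add_mul, ite_mul, zero_mul]
      simp_rw [hterm]
      exact sum_tridL I _ _ _ p.1 p.2 (by omega)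
        (fun hmem => by
          have hpk : p.1 - 1 = k := by
            have := (hIc (p.1 - 1)).not.mp hmem
            omega
          rw [hpk, hAk, zero_mul])
        (fun hmem => by
          have hpm : p.1 + 1 = m - l := by
            have := (hIc (p.1 + 1)).not.mp hmem
            omega
          rw [hpm, hBml, zero_mul])
    rw [lhs, rhs]
    have := star m k l A B hA hB hklm p.1 q.1 hp.1 (by omega) hq.1 (by omega)
    linear_combination this
  have hTC : Tm * Cm = Cm * Tm.transpose := by
    calc Tm * Cm = (Cm * Gm) * (Tm * Cm) := by rw [hCG, Matrix.one_mul]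
      _ = Cm * ((Gm * Tm) * Cm) := by
          rw [Matrix.mul_assoc, Matrix.mul_assoc]
      _ = Cm * ((Tm.transpose * Gm) * Cm) := by rw [hGT]
      _ = Cm * Tm.transpose * (Gm * Cm) := by
          rw [Matrix.mul_assoc, Matrix.mul_assoc]
      _ = Cm * Tm.transpose := by rw [hGC, Matrix.mul_one]
  -- extract the entry
  have hjI : j ∈ I := (hIc j).mpr ⟨hj1, by omega⟩
  have hhI : h ∈ I := (hIc h).mpr ⟨hh1, hh2⟩
  have entry := congrFun (congrFun hTC ⟨j, hjI⟩) ⟨h, hhI⟩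
  rw [Matrix.mul_apply, Matrix.mul_apply] at entry
  simp only [Matrix.transpose_apply] at entry
  have conv1 : ∑ i : I, Tm ⟨j, hjI⟩ i * Cm i ⟨h, hhI⟩ = ∑ i ∈ I, Tnat j i * C i h :=
    Finset.sum_coe_sort I (fun i => Tnat j i * C i h)
  have conv2 : ∑ i : I, Cm ⟨j, hjI⟩ i * Tm ⟨h, hhI⟩ i = ∑ i ∈ I, C j i * Tnat h i :=
    Finset.sum_coe_sort I (fun i => C j i * Tnat h i)
  rw [conv1, conv2] at entry
  have lhs : ∑ i ∈ I, Tnat j i * C i h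
      = A (j : ℝ) * C (j + 1) h + B (j : ℝ) * C (j - 1) h
        + 2 * (j : ℝ) * ((m : ℝ) - j) * C j h := by
    have hterm : ∀ i, Tnat j i * C i h
        = ((if i = j + 1 then A (j : ℝ) * C i h else 0)
          + (if i + 1 = j then B (j : ℝ) * C i h else 0)
          + (if i = j then 2 * (j : ℝ) * ((m : ℝ) - j) * C i h else 0)) := by
      intro i
      rw [hTnat]
      simp only [add_mul, ite_mul, zero_mul]
    simp_rw [hterm]
    exact sum_tridR I _ _ _ j hjI (by omega)
      (fun hmem => absurd ((hIc (j + 1)).mpr ⟨by omega, by omega⟩) hmem)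
      (fun hmem => by rw [hC0 (j - 1) h (Or.inl hmem), mul_zero])
  have rhs : ∑ i ∈ I, C j i * Tnat h i
      = C j (h + 1) * A (h : ℝ) + C j (h - 1) * B (h : ℝ)
        + C j h * (2 * (h : ℝ) * ((m : ℝ) - h)) := by
    have hterm : ∀ i, C j i * Tnat h i
        = ((if i = h + 1 then C j i * A (h : ℝ) else 0)
          + (if i + 1 = h then C j i * B (h : ℝ) else 0)
          + (if i = h then C j i * (2 * (h : ℝ) * ((m : ℝ) - h)) else 0)) := by
      intro i
      rw [hTnat]
      simp only [mul_add, mul_ite, mul_zero]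
    simp_rw [hterm]
    exact sum_tridR I _ _ _ h hhI (by omega)
      (fun hmem => by rw [hC0 j (h + 1) (Or.inr hmem), zero_mul])
      (fun hmem => by rw [hC0 j (h - 1) (Or.inr hmem), zero_mul])
  rw [lhs, rhs] at entry
  have hcm : ((j : ℝ) - h) * ((j : ℝ) + h - m) * 2
      = 2 * (h : ℝ) * ((m : ℝ) - h) - 2 * (j : ℝ) * ((m : ℝ) - j)
        + ((j:ℝ)*(j:ℝ) - (h:ℝ)*(h:ℝ)) * 0 := by ring
  linear_combination entry
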